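/- The nonatomic charging game with f continuous and strictly increasing has a unique Nash equilibrium charging configuration: the Nash equilibria coincide with maximizers of the strictly concave potential Φ(x) = -Σ_t ∫_0^{x_t} f(L_t^exo + Pv)dv over the convex feasible set, and this maximizer is unique. -/

import Mathlib

namespace Stmt9

variable (T K : ℕ) (w : Fin K → ℝ) (a d : Fin K → ℤ) (C : Fin K → ℕ)
  (Lexo : ℤ → ℝ) (P : ℝ) (f : ℝ → ℝ)

/-- Start-time set of class `k`. -/
noncomputable def S (k : Fin K) : Finset ℤ := Finset.Icc (a k) (d k - (C k : ℤ))

/-- Induced charging configuration `x_t = Σ_k w_k Σ_{t'=1}^{C_k} y_{k,(t-C_k+t')}`. -/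
noncomputable def config (y : Fin K → ℤ → ℝ) (t : ℤ) : ℝ :=
  ∑ k : Fin K, w k * ∑ t' ∈ Finset.Icc (1 : ℤ) (C k : ℤ), y k (t - (C k : ℤ) + t')

/-- A feasible strategy profile: each class spreads its unit mass over its start times. -/
def Feasible (y : Fin K → ℤ → ℝ) : Prop :=
  (∀ k t, 0 ≤ y k t) ∧ (∀ k t, t ∉ S K a d C k → y k t = 0) ∧
  (∀ k, ∑ t ∈ S K a d C k, y k t = 1)

/-- Cost of class `k` for start time `s` given configuration `x`. -/
noncomputable def cost (x : ℤ → ℝ) (k : Fin K) (s : ℤ) : ℝ :=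
  ∑ t ∈ Finset.Icc s (s + (C k : ℤ) - 1), f (Lexo t + P * x t)

/-- Wardrop (Nash) equilibrium: every start time used with positive weight by a class
minimizes that class' cost. -/
noncomputable def IsWardrop (y : Fin K → ℤ → ℝ) : Prop :=
  ∀ k : Fin K, ∀ s ∈ S K a d C k, 0 < y k s →
    ∀ s' ∈ S K a d C k,
      cost K C Lexo P f (config K w C y) k s ≤ cost K C Lexo P f (config K w C y) k s'

/-- Nonatomic potential. -/
noncomputable def Phi (x : ℤ → ℝ) : ℝ :=
  -∑ t ∈ Finset.Icc (1 : ℤ) (T : ℤ), ∫ v in (0 : ℝ)..(x t), f (Lexo t + P * v)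

/-! ### Auxiliary lemmas -/

/-- Strict gradient inequality for the primitive of an increasing continuous function. -/
lemma grad_lt (hP : 0 < P) (hfc : Continuous f) (hfm : StrictMono f)
    (L u u' : ℝ) (hne : u ≠ u') :
    f (L + P * u) * (u' - u) < ∫ v in u..u', f (L + P * v) := by
  have hg : Continuous (fun v => f (L + P * v)) := by continuity
  rcases lt_or_gt_of_ne hne with h | h
  · have hpos : 0 < ∫ v in u..u', (f (L + P * v) - f (L + P * u)) := by
      apply intervalIntegral.intervalIntegral_pos_of_pos_on
        ((hg.sub continuous_const).intervalIntegrable u u') _ h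
      intro x hx
      have : L + P * u < L + P * x := by nlinarith [hx.1]
      simpa using sub_pos.mpr (hfm this)
    rw [intervalIntegral.integral_sub (hg.intervalIntegrable u u')
      (continuous_const.intervalIntegrable u u'), intervalIntegral.integral_const] at hpos
    simp only [smul_eq_mul] at hpos
    nlinarith
  · have hpos : 0 < ∫ v in u'..u, (f (L + P * u) - f (L + P * v)) := by
      apply intervalIntegral.intervalIntegral_pos_of_pos_on
        ((continuous_const.sub hg).intervalIntegrable u' u) _ h
      intro x hx
      have : L + P * x < L + P * u := by nlinarith [hx.2]
      simpa using sub_pos.mpr (hfm this)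
    rw [intervalIntegral.integral_sub (continuous_const.intervalIntegrable u' u)
      (hg.intervalIntegrable u' u), intervalIntegral.integral_const,
      intervalIntegral.integral_symm u u'] at hpos
    simp only [smul_eq_mul] at hpos
    nlinarith

lemma grad_le (hP : 0 < P) (hfc : Continuous f) (hfm : StrictMono f)
    (L u u' : ℝ) :
    f (L + P * u) * (u' - u) ≤ ∫ v in u..u', f (L + P * v) := by
  rcases eq_or_ne u u' with rfl | h
  · simp
  · exact (grad_lt P f hP hfc hfm L u u' h).le

/-- The fundamental exchange-of-summation identity. -/
lemma sum_config (hwin : ∀ k, 1 ≤ a k ∧ d k ≤ (T : ℤ))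
    (y : Fin K → ℤ → ℝ) (hy0 : ∀ k t, t ∉ S K a d C k → y k t = 0) (c : ℤ → ℝ) :
    ∑ t ∈ Finset.Icc (1 : ℤ) (T : ℤ), c t * config K w C y t
      = ∑ k : Fin K, w k * ∑ s ∈ S K a d C k, y k s *
          ∑ t ∈ Finset.Icc s (s + (C k : ℤ) - 1), c t := by
  unfold config
  simp only [Finset.mul_sum]
  rw [Finset.sum_comm]
  refine Finset.sum_congr rfl fun k _ => ?_
  have key : ∀ t' ∈ Finset.Icc (1 : ℤ) (C k : ℤ),
      ∑ t ∈ Finset.Icc (1 : ℤ) (T : ℤ), c t * y k (t - (C k : ℤ) + t')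
        = ∑ s ∈ S K a d C k, c (s + (C k : ℤ) - t') * y k s := by
    intro t' ht'
    rw [Finset.mem_Icc] at ht'
    have step1 : ∑ t ∈ Finset.Icc (1 : ℤ) (T : ℤ), c t * y k (t - (C k : ℤ) + t')
        = ∑ s ∈ Finset.Icc (1 - (C k : ℤ) + t') ((T : ℤ) - (C k : ℤ) + t'),
            c (s + (C k : ℤ) - t') * y k s := by
      refine Finset.sum_nbij' (fun t => t - (C k : ℤ) + t') (fun s => s + (C k : ℤ) - t')
        ?_ ?_ ?_ ?_ ?_
      · intro t ht; simp only [Finset.mem_Icc] at *; omega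
      · intro s hs; simp only [Finset.mem_Icc] at *; omega
      · intro t _; ring
      · intro s _; ring
      · intro t _; congr 1; ring
    rw [step1]
    refine (Finset.sum_subset ?_ ?_).symm
    · intro s hs
      rw [Finset.mem_Icc] at *
      unfold S at hs; rw [Finset.mem_Icc] at hs
      have := hwin k; omega
    · intro s _ hs
      rw [hy0 k s hs, mul_zero]
  calc ∑ t ∈ Finset.Icc (1 : ℤ) (T : ℤ),
        ∑ t' ∈ Finset.Icc (1 : ℤ) (C k : ℤ), c t * (w k * y k (t - (C k : ℤ) + t'))
      = ∑ t' ∈ Finset.Icc (1 : ℤ) (C k : ℤ),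
          ∑ t ∈ Finset.Icc (1 : ℤ) (T : ℤ), w k * (c t * y k (t - (C k : ℤ) + t')) := by
        rw [Finset.sum_comm]; apply Finset.sum_congr rfl; intros; apply Finset.sum_congr rfl
        intros; ring
    _ = ∑ t' ∈ Finset.Icc (1 : ℤ) (C k : ℤ),
          w k * ∑ s ∈ S K a d C k, c (s + (C k : ℤ) - t') * y k s := by
        refine Finset.sum_congr rfl fun t' ht' => ?_
        rw [← Finset.mul_sum, key t' ht']
    _ = w k * ∑ s ∈ S K a d C k,
          y k s * ∑ t' ∈ Finset.Icc (1 : ℤ) (C k : ℤ), c (s + (C k : ℤ) - t') := by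
        rw [← Finset.mul_sum, Finset.sum_comm]
        congr 1
        refine Finset.sum_congr rfl fun s _ => ?_
        rw [Finset.mul_sum]
        refine Finset.sum_congr rfl fun t' _ => ?_
        ring
    _ = w k * ∑ s ∈ S K a d C k,
          y k s * ∑ t ∈ Finset.Icc s (s + (C k : ℤ) - 1), c t := by
        congr 1
        refine Finset.sum_congr rfl fun s _ => ?_
        congr 1
        refine Finset.sum_nbij' (fun t' => s + (C k : ℤ) - t') (fun t => s + (C k : ℤ) - t)
          ?_ ?_ ?_ ?_ ?_
        · intro t ht; simp only [Finset.mem_Icc] at *; omega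
        · intro t ht; simp only [Finset.mem_Icc] at *; omega
        · intro t _; ring
        · intro t _; ring
        · intro t _; rfl
    _ = ∑ s ∈ S K a d C k, ∑ t ∈ Finset.Icc s (s + (C k : ℤ) - 1), w k * (y k s * c t) := by
        simp only [Finset.mul_sum, mul_assoc]


lemma config_zero (hwin : ∀ k, 1 ≤ a k ∧ d k ≤ (T : ℤ))
    (y : Fin K → ℤ → ℝ) (hy0 : ∀ k t, t ∉ S K a d C k → y k t = 0)
    (t : ℤ) (ht : t ∉ Finset.Icc (1 : ℤ) (T : ℤ)) : config K w C y t = 0 := by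
  unfold config
  refine Finset.sum_eq_zero fun k _ => ?_
  rw [Finset.sum_eq_zero, mul_zero]
  intro t' ht'
  rw [Finset.mem_Icc] at ht'
  apply hy0
  unfold S
  rw [Finset.mem_Icc] at ht ⊢
  have := hwin k
  omega

lemma config_add_smul (y z : Fin K → ℤ → ℝ) (ε : ℝ) (t : ℤ) :
    config K w C (fun k t => y k t + ε * z k t) t
      = config K w C y t + ε * config K w C z t := by
  unfold config
  simp only [Finset.sum_add_distrib, mul_add, Finset.mul_sum, mul_comm, mul_assoc,
    mul_left_comm]

lemma Phi_le_sub (hP : 0 < P) (hfc : Continuous f) (hfm : StrictMono f) (x x' : ℤ → ℝ) :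
    Phi T Lexo P f x' ≤ Phi T Lexo P f x
      - ∑ t ∈ Finset.Icc (1 : ℤ) (T : ℤ), f (Lexo t + P * x t) * (x' t - x t) := by
  unfold Phi
  have key : ∑ t ∈ Finset.Icc (1 : ℤ) (T : ℤ), f (Lexo t + P * x t) * (x' t - x t)
      ≤ ∑ t ∈ Finset.Icc (1 : ℤ) (T : ℤ),
          ((∫ v in (0:ℝ)..(x' t), f (Lexo t + P * v)) - ∫ v in (0:ℝ)..(x t), f (Lexo t + P * v)) := by
    refine Finset.sum_le_sum fun t _ => ?_
    rw [intervalIntegral.integral_interval_sub_left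
      ((by continuity : Continuous fun v => f (Lexo t + P * v)).intervalIntegrable _ _)
      ((by continuity : Continuous fun v => f (Lexo t + P * v)).intervalIntegrable _ _)]
    exact grad_le P f hP hfc hfm (Lexo t) (x t) (x' t)
  rw [Finset.sum_sub_distrib] at key
  linarith

lemma Phi_lt_sub (hP : 0 < P) (hfc : Continuous f) (hfm : StrictMono f) (x x' : ℤ → ℝ)
    (hne : ∃ t ∈ Finset.Icc (1 : ℤ) (T : ℤ), x t ≠ x' t) :
    Phi T Lexo P f x' < Phi T Lexo P f x
      - ∑ t ∈ Finset.Icc (1 : ℤ) (T : ℤ), f (Lexo t + P * x t) * (x' t - x t) := by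
  unfold Phi
  obtain ⟨t₀, ht₀, hne₀⟩ := hne
  have key : ∑ t ∈ Finset.Icc (1 : ℤ) (T : ℤ), f (Lexo t + P * x t) * (x' t - x t)
      < ∑ t ∈ Finset.Icc (1 : ℤ) (T : ℤ),
          ((∫ v in (0:ℝ)..(x' t), f (Lexo t + P * v)) - ∫ v in (0:ℝ)..(x t), f (Lexo t + P * v)) := by
    refine Finset.sum_lt_sum (fun t _ => ?_) ⟨t₀, ht₀, ?_⟩
    · rw [intervalIntegral.integral_interval_sub_left
        ((by continuity : Continuous fun v => f (Lexo t + P * v)).intervalIntegrable _ _)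
        ((by continuity : Continuous fun v => f (Lexo t + P * v)).intervalIntegrable _ _)]
      exact grad_le P f hP hfc hfm (Lexo t) (x t) (x' t)
    · rw [intervalIntegral.integral_interval_sub_left
        ((by continuity : Continuous fun v => f (Lexo t₀ + P * v)).intervalIntegrable _ _)
        ((by continuity : Continuous fun v => f (Lexo t₀ + P * v)).intervalIntegrable _ _)]
      exact grad_lt P f hP hfc hfm (Lexo t₀) (x t₀) (x' t₀) hne₀
  rw [Finset.sum_sub_distrib] at key
  linarith

/-- a class always uses at least one start time -/
lemma exists_used (y : Fin K → ℤ → ℝ) (hy : Feasible K a d C y) (k : Fin K) :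
    ∃ s ∈ S K a d C k, 0 < y k s := by
  by_contra h
  push_neg at h
  have : ∑ t ∈ S K a d C k, y k t = 0 :=
    Finset.sum_eq_zero fun s hs => le_antisymm (h s hs) (hy.1 k s)
  rw [hy.2.2 k] at this
  norm_num at this

/-- Wardrop linearized optimality: the equilibrium configuration minimizes the linearized
cost among all feasible profiles. -/
lemma wardrop_lin (hw : ∀ k, 0 < w k) (hwin : ∀ k, 1 ≤ a k ∧ d k ≤ (T : ℤ))
    (y y' : Fin K → ℤ → ℝ) (hy : Feasible K a d C y) (hy' : Feasible K a d C y')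
    (hW : IsWardrop K w a d C Lexo P f y) :
    ∑ t ∈ Finset.Icc (1 : ℤ) (T : ℤ),
        f (Lexo t + P * config K w C y t) * config K w C y t
      ≤ ∑ t ∈ Finset.Icc (1 : ℤ) (T : ℤ),
        f (Lexo t + P * config K w C y t) * config K w C y' t := by
  set x := config K w C y with hx
  set c : ℤ → ℝ := fun t => f (Lexo t + P * x t) with hc
  rw [sum_config T K w a d C hwin y hy.2.1 c, sum_config T K w a d C hwin y' hy'.2.1 c]
  refine Finset.sum_le_sum fun k _ => ?_
  have hcost : ∀ s, (∑ t ∈ Finset.Icc s (s + (C k : ℤ) - 1), c t)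
      = cost K C Lexo P f x k s := fun s => rfl
  obtain ⟨s₀, hs₀, hpos₀⟩ := exists_used K a d C y hy k
  have hmin : ∀ s' ∈ S K a d C k, cost K C Lexo P f x k s₀ ≤ cost K C Lexo P f x k s' :=
    fun s' hs' => hW k s₀ hs₀ hpos₀ s' hs'
  have left : ∑ s ∈ S K a d C k, y k s * ∑ t ∈ Finset.Icc s (s + (C k : ℤ) - 1), c t
      = cost K C Lexo P f x k s₀ := by
    have : ∀ s ∈ S K a d C k,
        y k s * ∑ t ∈ Finset.Icc s (s + (C k : ℤ) - 1), c t
          = y k s * cost K C Lexo P f x k s₀ := by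
      intro s hs
      rcases eq_or_lt_of_le (hy.1 k s) with h0 | h0
      · rw [← h0]; ring
      · rw [hcost]
        congr 1
        exact le_antisymm (hW k s hs h0 s₀ hs₀) (hmin s hs)
    rw [Finset.sum_congr rfl this, ← Finset.sum_mul, hy.2.2 k, one_mul]
  have right : cost K C Lexo P f x k s₀
      ≤ ∑ s ∈ S K a d C k, y' k s * ∑ t ∈ Finset.Icc s (s + (C k : ℤ) - 1), c t := by
    calc cost K C Lexo P f x k s₀
        = ∑ s ∈ S K a d C k, y' k s * cost K C Lexo P f x k s₀ := by
          rw [← Finset.sum_mul, hy'.2.2 k, one_mul]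
      _ ≤ ∑ s ∈ S K a d C k, y' k s * ∑ t ∈ Finset.Icc s (s + (C k : ℤ) - 1), c t := by
          refine Finset.sum_le_sum fun s hs => ?_
          rw [hcost]
          exact mul_le_mul_of_nonneg_left (hmin s hs) (hy'.1 k s)
  have hwk := (hw k).le
  rw [left]
  exact mul_le_mul_of_nonneg_left right hwk

/-- A maximizer of the potential is a Wardrop equilibrium. -/
lemma max_isWardrop (hw : ∀ k, 0 < w k)
    (hwin : ∀ k, 1 ≤ a k ∧ d k ≤ (T : ℤ))
    (hP : 0 < P) (hfc : Continuous f) (hfm : StrictMono f)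
    (y : Fin K → ℤ → ℝ) (hy : Feasible K a d C y)
    (hmax : ∀ y', Feasible K a d C y' →
      Phi T Lexo P f (config K w C y') ≤ Phi T Lexo P f (config K w C y)) :
    IsWardrop K w a d C Lexo P f y := by
  intro k s hs hpos s' hs'
  by_contra hlt
  push_neg at hlt
  set x := config K w C y with hxdef
  have hss' : s ≠ s' := by rintro rfl; exact absurd le_rfl (not_le.mpr hlt)
  -- the perturbation direction
  set z : Fin K → ℤ → ℝ := fun k' t =>
    if k' = k then ((if t = s' then (1:ℝ) else 0) - (if t = s then 1 else 0)) else 0 with hzdef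
  have hz0 : ∀ k' t, t ∉ S K a d C k' → z k' t = 0 := by
    intro k' t ht
    simp only [hzdef]
    by_cases hk : k' = k
    · subst hk
      have h1 : t ≠ s' := by rintro rfl; exact ht hs'
      have h2 : t ≠ s := by rintro rfl; exact ht hs
      simp [h1, h2]
    · simp [hk]
  set δ : ℤ → ℝ := config K w C z with hδdef
  -- derivative of the potential along the direction
  set c : ℤ → ℝ := fun t => f (Lexo t + P * x t) with hcdef
  have hsum : ∑ t ∈ Finset.Icc (1 : ℤ) (T : ℤ), c t * δ t
      = w k * (cost K C Lexo P f x k s' - cost K C Lexo P f x k s) := by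
    rw [hδdef, sum_config T K w a d C hwin z hz0 c]
    rw [Finset.sum_eq_single k]
    · congr 1
      have : ∀ σ ∈ S K a d C k,
          z k σ * ∑ t ∈ Finset.Icc σ (σ + (C k : ℤ) - 1), c t
            = (if σ = s' then cost K C Lexo P f x k σ else 0)
              - (if σ = s then cost K C Lexo P f x k σ else 0) := by
        intro σ _
        simp only [hzdef, if_pos rfl, sub_mul, ite_mul, one_mul, zero_mul]
        rfl
      rw [Finset.sum_congr rfl this, Finset.sum_sub_distrib,
        Finset.sum_ite_eq' (S K a d C k) s' _, Finset.sum_ite_eq' (S K a d C k) s _,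
        if_pos hs', if_pos hs]
    · intro k' _ hk'
      have : ∀ σ ∈ S K a d C k', z k' σ * ∑ t ∈ Finset.Icc σ (σ + (C k' : ℤ) - 1), c t = 0 := by
        intro σ _
        simp [hzdef, hk']
      rw [Finset.sum_congr rfl this, Finset.sum_const_zero, mul_zero]
    · intro h; exact absurd (Finset.mem_univ k) h
  set D : ℝ := -∑ t ∈ Finset.Icc (1 : ℤ) (T : ℤ), c t * δ t with hDdef
  have hDpos : 0 < D := by
    rw [hDdef, hsum]
    have := hw k
    nlinarith
  -- derivative of g at 0
  set g : ℝ → ℝ := fun ε => Phi T Lexo P f (fun t => x t + ε * δ t) with hgdef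
  have hg : HasDerivAt g D 0 := by
    rw [hDdef]
    have : ∀ t ∈ Finset.Icc (1 : ℤ) (T : ℤ),
        HasDerivAt (fun ε : ℝ => ∫ v in (0:ℝ)..(x t + ε * δ t), f (Lexo t + P * v))
          (c t * δ t) 0 := by
      intro t _
      have hcont : Continuous fun v => f (Lexo t + P * v) := by continuity
      have hinner : HasDerivAt (fun ε : ℝ => x t + ε * δ t) (δ t) 0 := by
        simpa using ((hasDerivAt_id (0:ℝ)).mul_const (δ t)).const_add (x t)
      have houter := (hcont.integral_hasStrictDerivAt 0 (x t + 0 * δ t)).hasDerivAt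
      have := houter.comp 0 hinner
      simp only [Function.comp_def] at this
      have e : f (Lexo t + P * (x t + 0 * δ t)) * δ t = c t * δ t := by
        rw [hcdef]
        simp
      rw [e] at this
      exact this
    have hsum' := HasDerivAt.fun_sum this
    exact hsum'.neg
  -- find a small positive ε improving the potential
  have hslope := hasDerivAt_iff_tendsto_slope.mp hg
  have hmono : nhdsWithin (0:ℝ) (Set.Ioi 0) ≤ nhdsWithin (0:ℝ) {(0:ℝ)}ᶜ :=
    nhdsWithin_mono 0 (fun x (hx : (0:ℝ) < x) => (ne_of_gt hx : x ≠ 0))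
  have hev1 : ∀ᶠ ε in nhdsWithin (0:ℝ) (Set.Ioi 0), 0 < slope g 0 ε :=
    (hslope.eventually (eventually_gt_nhds hDpos)).filter_mono hmono
  have hev2 : ∀ᶠ ε in nhdsWithin (0:ℝ) (Set.Ioi 0), ε < y k s :=
    Filter.Eventually.filter_mono nhdsWithin_le_nhds (eventually_lt_nhds hpos)
  have hev3 : ∀ᶠ ε in nhdsWithin (0:ℝ) (Set.Ioi 0), (0:ℝ) < ε :=
    eventually_mem_nhdsWithin
  obtain ⟨ε, hεslope, hεy, hεpos⟩ := (hev1.and (hev2.and hev3)).exists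
  -- the perturbed profile
  set yε : Fin K → ℤ → ℝ := fun k' t => y k' t + ε * z k' t with hyε
  have hfeas : Feasible K a d C yε := by
    refine ⟨?_, ?_, ?_⟩
    · intro k₁ t₁
      simp only [hyε, hzdef]
      by_cases hk : k₁ = k
      · rcases hk with rfl
        simp only [if_pos rfl]
        by_cases h1 : t₁ = s'
        · have h2 : t₁ ≠ s := by rw [h1]; exact fun h => hss' h.symm
          rw [if_pos h1, if_neg h2]
          have := hy.1 k₁ t₁
          simp only [if_true]
          nlinarith
        · by_cases h2 : t₁ = s
          · rcases h2 with rfl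
            rw [if_neg h1, if_pos rfl]
            simp only [if_true]
            nlinarith
          · rw [if_neg h1, if_neg h2]
            have := hy.1 k₁ t₁
            simp only [if_true]
            nlinarith
      · rw [if_neg hk, mul_zero, add_zero]
        exact hy.1 k₁ t₁
    · intro k₁ t₁ ht
      simp only [hyε]
      rw [hy.2.1 k₁ t₁ ht, hz0 k₁ t₁ ht]
      ring
    · intro k₁
      simp only [hyε]
      rw [Finset.sum_add_distrib, hy.2.2 k₁, ← Finset.mul_sum]
      have hzsum : ∑ t₁ ∈ S K a d C k₁, z k₁ t₁ = 0 := by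
        by_cases hk : k₁ = k
        · rcases hk with rfl
          simp only [hzdef, if_pos rfl]
          rw [Finset.sum_sub_distrib, Finset.sum_ite_eq' (S K a d C k₁) s' (fun _ => (1:ℝ)),
            Finset.sum_ite_eq' (S K a d C k₁) s (fun _ => (1:ℝ)), if_pos hs', if_pos hs]
          ring
        · simp [hzdef, hk]
      rw [hzsum, mul_zero, add_zero]
  -- contradiction with maximality
  have hcfg : config K w C yε = fun t => x t + ε * δ t := by
    funext t
    exact config_add_smul K w C y z ε t
  have h0 : g 0 = Phi T Lexo P f x := by
    show Phi T Lexo P f (fun t => x t + 0 * δ t) = Phi T Lexo P f x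
    congr 1
    funext t
    rw [zero_mul, add_zero]
  have hεval : Phi T Lexo P f (config K w C yε) = g ε := by
    rw [hcfg]
  have hgε : g 0 < g ε := by
    have hslope_val : slope g 0 ε = (g ε - g 0) / ε := by
      rw [slope_def_field, sub_zero]
    rw [hslope_val] at hεslope
    rcases div_pos_iff.mp hεslope with ⟨h1, _⟩ | ⟨_, h2⟩
    · linarith
    · linarith
  have := hmax yε hfeas
  rw [hεval, ← h0] at this
  linarith

lemma exists_max (hS : ∀ k, (S K a d C k).Nonempty) (hfc : Continuous f) :
    ∃ y, Feasible K a d C y ∧ ∀ y', Feasible K a d C y' →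
      Phi T Lexo P f (config K w C y') ≤ Phi T Lexo P f (config K w C y) := by
  set A : Set (Fin K → ℤ → ℝ) := {y | Feasible K a d C y} with hA
  -- A is nonempty
  have hne : A.Nonempty := by
    refine ⟨fun k t => if t = (hS k).choose then 1 else 0, ?_, ?_, ?_⟩
    · intro k t; dsimp only; split <;> norm_num
    · intro k t ht
      dsimp only
      rw [if_neg]
      rintro rfl
      exact ht (hS k).choose_spec
    · intro k
      rw [Finset.sum_ite_eq' (S K a d C k) (hS k).choose (fun _ => (1:ℝ)),
        if_pos (hS k).choose_spec]
  -- evaluation maps are continuous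
  have hev : ∀ (k : Fin K) (t : ℤ), Continuous fun y : Fin K → ℤ → ℝ => y k t :=
    fun k t => (continuous_apply t).comp (continuous_apply k)
  -- A is compact
  have hclosed : IsClosed A := by
    have h1 : IsClosed (⋂ (k : Fin K) (t : ℤ), {y : Fin K → ℤ → ℝ | 0 ≤ y k t}) :=
      isClosed_iInter fun k => isClosed_iInter fun t =>
        isClosed_le continuous_const (hev k t)
    have h2 : IsClosed (⋂ (k : Fin K) (t : ℤ) (_ : t ∉ S K a d C k),
        {y : Fin K → ℤ → ℝ | y k t = 0}) :=
      isClosed_iInter fun k => isClosed_iInter fun t => isClosed_iInter fun _ =>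
        isClosed_eq (hev k t) continuous_const
    have h3 : IsClosed (⋂ (k : Fin K),
        {y : Fin K → ℤ → ℝ | ∑ t ∈ S K a d C k, y k t = 1}) :=
      isClosed_iInter fun k =>
        isClosed_eq (continuous_finset_sum _ fun t _ => hev k t) continuous_const
    have : A = (⋂ (k : Fin K) (t : ℤ), {y : Fin K → ℤ → ℝ | 0 ≤ y k t})
        ∩ ((⋂ (k : Fin K) (t : ℤ) (_ : t ∉ S K a d C k), {y : Fin K → ℤ → ℝ | y k t = 0})
          ∩ (⋂ (k : Fin K), {y : Fin K → ℤ → ℝ | ∑ t ∈ S K a d C k, y k t = 1})) := by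
      ext y
      simp only [hA, Set.mem_setOf_eq, Set.mem_inter_iff, Set.mem_iInter, Feasible]

    rw [this]
    exact h1.inter (h2.inter h3)
  have hsub : A ⊆ Set.pi Set.univ (fun k : Fin K =>
      Set.pi Set.univ fun t : ℤ => Set.Icc (0:ℝ) 1) := by
    intro y hy k _ t _
    refine ⟨hy.1 k t, ?_⟩
    by_cases ht : t ∈ S K a d C k
    · calc y k t ≤ ∑ t' ∈ S K a d C k, y k t' :=
        Finset.single_le_sum (fun t' _ => hy.1 k t') ht
      _ = 1 := hy.2.2 k
    · rw [hy.2.1 k t ht]; norm_num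
  have hcomp : IsCompact A := by
    refine IsCompact.of_isClosed_subset ?_ hclosed hsub
    exact isCompact_univ_pi fun k => isCompact_univ_pi fun t => isCompact_Icc
  -- the objective is continuous
  have hcont : Continuous fun y : Fin K → ℤ → ℝ => Phi T Lexo P f (config K w C y) := by
    have cont_config : ∀ t : ℤ, Continuous fun y : Fin K → ℤ → ℝ => config K w C y t :=
      fun t => continuous_finset_sum _ fun k _ =>
        continuous_const.mul (continuous_finset_sum _ fun t' _ => hev k _)
    have cont_F : ∀ t : ℤ, Continuous fun u : ℝ => ∫ v in (0:ℝ)..u, f (Lexo t + P * v) := by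
      intro t
      have hc : Continuous fun v => f (Lexo t + P * v) := by continuity
      refine continuous_iff_continuousAt.mpr fun u => ?_
      exact ((hc.integral_hasStrictDerivAt 0 u).hasDerivAt).continuousAt
    unfold Phi
    exact (continuous_finset_sum _ fun t _ => (cont_F t).comp (cont_config t)).neg
  obtain ⟨ymax, hmem, hmax⟩ := hcomp.exists_isMaxOn hne hcont.continuousOn
  exact ⟨ymax, hmem, fun y' hy' => hmax hy'⟩

/-- with `f` continuous and strictly increasing, the Wardrop equilibria
coincide with maximizers of the strictly concave potential over the feasible set, an
equilibrium exists, and the equilibrium charging configuration is unique. -/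
theorem nonatomic_unique_equilibrium
    (hw : ∀ k, 0 < w k) (hwsum : ∑ k, w k = 1)
    (hC : ∀ k, 1 ≤ C k) (hS : ∀ k, (S K a d C k).Nonempty)
    (hwin : ∀ k, 1 ≤ a k ∧ d k ≤ (T : ℤ))
    (hP : 0 < P) (hfc : Continuous f) (hfm : StrictMono f) :
    (∀ y, Feasible K a d C y →
      (IsWardrop K w a d C Lexo P f y ↔
        ∀ y', Feasible K a d C y' →
          Phi T Lexo P f (config K w C y') ≤ Phi T Lexo P f (config K w C y))) ∧
    (∃ y, Feasible K a d C y ∧ IsWardrop K w a d C Lexo P f y) ∧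
    (∀ y y', Feasible K a d C y → IsWardrop K w a d C Lexo P f y →
      Feasible K a d C y' → IsWardrop K w a d C Lexo P f y' →
      ∀ t, config K w C y t = config K w C y' t) := by
  have hsplit : ∀ x x' : ℤ → ℝ,
      ∑ t ∈ Finset.Icc (1 : ℤ) (T : ℤ), f (Lexo t + P * x t) * (x' t - x t)
        = (∑ t ∈ Finset.Icc (1 : ℤ) (T : ℤ), f (Lexo t + P * x t) * x' t)
          - ∑ t ∈ Finset.Icc (1 : ℤ) (T : ℤ), f (Lexo t + P * x t) * x t := by
    intro x x'
    rw [← Finset.sum_sub_distrib]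
    exact Finset.sum_congr rfl fun t _ => by ring
  have partA : ∀ y, Feasible K a d C y → IsWardrop K w a d C Lexo P f y →
      ∀ y', Feasible K a d C y' →
        Phi T Lexo P f (config K w C y') ≤ Phi T Lexo P f (config K w C y) := by
    intro y hy hW y' hy'
    have hlin := wardrop_lin T K w a d C Lexo P f hw hwin y y' hy hy' hW
    have hle := Phi_le_sub T Lexo P f hP hfc hfm (config K w C y) (config K w C y')
    rw [hsplit] at hle
    linarith
  refine ⟨fun y hy => ⟨fun hW => partA y hy hW,
    fun hmax => max_isWardrop T K w a d C Lexo P f hw hwin hP hfc hfm y hy hmax⟩, ?_, ?_⟩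
  · obtain ⟨y, hy, hmax⟩ := exists_max T K w a d C Lexo P f hS hfc
    exact ⟨y, hy, max_isWardrop T K w a d C Lexo P f hw hwin hP hfc hfm y hy hmax⟩
  · intro y y' hy hW hy' hW' t
    by_contra hne
    have hIcc : ∃ t₀ ∈ Finset.Icc (1 : ℤ) (T : ℤ), config K w C y t₀ ≠ config K w C y' t₀ := by
      by_cases ht : t ∈ Finset.Icc (1 : ℤ) (T : ℤ)
      · exact ⟨t, ht, hne⟩
      · exfalso
        apply hne
        rw [config_zero T K w a d C hwin y hy.2.1 t ht,
          config_zero T K w a d C hwin y' hy'.2.1 t ht]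
    have hIcc' : ∃ t₀ ∈ Finset.Icc (1 : ℤ) (T : ℤ), config K w C y' t₀ ≠ config K w C y t₀ := by
      obtain ⟨t₀, h₁, h₂⟩ := hIcc
      exact ⟨t₀, h₁, h₂.symm⟩
    have h1 := Phi_lt_sub T Lexo P f hP hfc hfm (config K w C y) (config K w C y') hIcc
    have h2 := Phi_lt_sub T Lexo P f hP hfc hfm (config K w C y') (config K w C y) hIcc'
    have hlin1 := wardrop_lin T K w a d C Lexo P f hw hwin y y' hy hy' hW
    have hlin2 := wardrop_lin T K w a d C Lexo P f hw hwin y' y hy' hy hW'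
    rw [hsplit] at h1 h2
    linarith

end Stmt9
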